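/- The number of vectors v ∈ 𝔽₂^40 such that Proj(v) ∈ E_10, every column of the 4×10 array of v has even parity, and the top row of the array of v has even parity, is exactly 2^19. Likewise, the number of v ∈ 𝔽₂^40 such that Proj(v) ∈ E_10, every column has odd parity, and the top row has odd parity, is exactly 2^19. -/

import Mathlib

open scoped BigOperators

section Defs

variable {F : Type} [Field F] [DecidableEq F]

/-- The binary coordinate in column `j` (0-indexed), row `k`. -/
def idx (j : Fin 10) (k : Fin 4) : Fin 40 :=
  ⟨4 * j.val + k.val, by have := j.isLt; have := k.isLt; omega⟩

/-- The map φ : GF(4) → 𝔽₂⁴, 0↦0000, 1↦0011, ω↦0101, ϖ↦0110. -/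
def phi (ω : F) : F → (Fin 4 → ZMod 2) := fun x =>
  if x = 0 then ![0, 0, 0, 0]
  else if x = 1 then ![0, 0, 1, 1]
  else if x = ω then ![0, 1, 0, 1]
  else ![0, 1, 1, 0]

/-- Ĉ : the image of a quaternary code under coordinatewise φ. -/
def hatSet (ω : F) (C : Set (Fin 10 → F)) : Set (Fin 40 → ZMod 2) :=
  { v | ∃ c ∈ C, ∀ (j : Fin 10) (k : Fin 4), v (idx j k) = phi ω (c j) k }

/-- d₄¹⁰ : binary vectors of length 40 constant on each of the ten columns. -/
def d4ten : Set (Fin 40 → ZMod 2) :=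
  { v | ∀ (j : Fin 10) (k k' : Fin 4), v (idx j k) = v (idx j k') }

/-- (d₄¹⁰)₀ : the subcode of d₄¹⁰ of codewords of weight divisible by 8. -/
def d4ten0 : Set (Fin 40 → ZMod 2) :=
  { v | v ∈ d4ten ∧ 8 ∣ hammingNorm v }

/-- The generator 1000 1000 ... 1000 of e_C. -/
def eCvec : Fin 40 → ZMod 2 := fun i => if i.val % 4 = 0 then 1 else 0

/-- The generator 1000 (×9) 0111 of e_B. -/
def eBvec : Fin 40 → ZMod 2 := fun i =>
  if i.val < 36 then (if i.val % 4 = 0 then 1 else 0)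
  else (if i.val % 4 = 0 then 0 else 1)

/-- ρ_C(C) = Ĉ + (d₄¹⁰)₀ + e_C. -/
def rhoC (ω : F) (C : Set (Fin 10 → F)) : Set (Fin 40 → ZMod 2) :=
  { v | ∃ a ∈ hatSet ω C, ∃ b ∈ d4ten0,
      ∃ e ∈ ({0, eCvec} : Set (Fin 40 → ZMod 2)), v = a + b + e }

/-- ρ_B(C) = Ĉ + (d₄¹⁰)₀ + e_B. -/
def rhoB (ω : F) (C : Set (Fin 10 → F)) : Set (Fin 40 → ZMod 2) :=
  { v | ∃ a ∈ hatSet ω C, ∃ b ∈ d4ten0,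
      ∃ e ∈ ({0, eBvec} : Set (Fin 40 → ZMod 2)), v = a + b + e }

/-- The trace inner product x⋆y = Σ Tr(xᵢ ȳᵢ), computed in GF(4) (its value lies
in the prime subfield GF(2)). -/
def traceIP (x y : Fin 10 → F) : F :=
  ∑ i, ((x i * (y i) ^ 2) + (x i * (y i) ^ 2) ^ 2)

/-- The dual of an additive code with respect to the trace inner product. -/
def addDual (C : Set (Fin 10 → F)) : Set (Fin 10 → F) :=
  { x | ∀ c ∈ C, traceIP x c = 0 }

/-- The dual of a binary code of length 40 under the standard inner product. -/
def binDual (S : Set (Fin 40 → ZMod 2)) : Set (Fin 40 → ZMod 2) :=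
  { x | ∀ c ∈ S, ∑ i, x i * c i = 0 }

/-- The dual of a quaternary code under the Hermitian inner product ⟨x,y⟩ = Σ xᵢ ȳᵢ. -/
def hermDual (S : Set (Fin 10 → F)) : Set (Fin 10 → F) :=
  { x | ∀ c ∈ S, ∑ i, x i * (c i) ^ 2 = 0 }

/-- The Hermitian self-dual [10,5,4] code E₁₀ over GF(4). -/
def E10 (ω : F) : Submodule F (Fin 10 → F) :=
  Submodule.span F {![1,1,1,1,0,0,0,0,0,0], ![0,0,1,1,1,1,0,0,0,0],
    ![0,0,0,0,1,1,1,1,0,0], ![0,0,0,0,0,0,1,1,1,1],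
    ![1,0,1,0,1,0,1,0,ω,ω^2]}

/-- The Hermitian self-dual [10,5,4] code B₁₀ over GF(4). -/
def B10 (ω : F) : Submodule F (Fin 10 → F) :=
  Submodule.span F {![1,1,1,1,0,0,0,0,0,0], ![0,1,ω,ω^2,1,0,0,0,0,0],
    ![0,0,0,0,0,1,1,1,1,0], ![0,0,0,0,0,0,1,ω,ω^2,1],
    ![0,1,ω^2,ω,0,0,1,ω^2,ω,0]}

/-- Interpret a bit as an element of GF(4). -/
def b2f (x : ZMod 2) : F := if x = 1 then 1 else 0

/-- The projection 𝔽₂⁴⁰ → GF(4)¹⁰ : column j ↦ v₂ᵢₙ·1 + v·ω + v·ϖ with row labels 0,1,ω,ϖ. -/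
def Proj (ω : F) (v : Fin 40 → ZMod 2) : Fin 10 → F := fun j =>
  b2f (v (idx j 1)) * 1 + b2f (v (idx j 2)) * ω + b2f (v (idx j 3)) * ω ^ 2

/-- The parity of column j (1 = odd number of ones). -/
def colPar (v : Fin 40 → ZMod 2) (j : Fin 10) : ZMod 2 := ∑ k, v (idx j k)

/-- The parity of the top row (1 = odd number of ones). -/
def topPar (v : Fin 40 → ZMod 2) : ZMod 2 := ∑ j, v (idx j 0)

/-- The coordinate permutation of Fin 10 permuting the five blocks {2m, 2m+1}
as units according to π, preserving order within blocks. -/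
def blockPerm (π : Equiv.Perm (Fin 5)) : Fin 10 → Fin 10 := fun t =>
  ⟨2 * (π ⟨t.val / 2, by have := t.isLt; omega⟩).val + t.val % 2, by
    have := (π ⟨t.val / 2, by have := t.isLt; omega⟩).isLt; have := t.isLt; omega⟩

/-- The coordinate permutation of Fin 10 interchanging the two coordinates within
each block belonging to S, fixing all other coordinates. -/
def blockSwap (S : Finset (Fin 5)) : Fin 10 → Fin 10 := fun t =>
  if (⟨t.val / 2, by have := t.isLt; omega⟩ : Fin 5) ∈ S then
    ⟨2 * (t.val / 2) + (1 - t.val % 2), by have := t.isLt; omega⟩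
  else t

end Defs
section A
variable {F : Type} [Field F] [Fintype F] [DecidableEq F]

lemma my_two_eq_zero (hF : Fintype.card F = 4) : (2 : F) = 0 := by
  have h4 : (4 : F) = 0 := by
    have := FiniteField.cast_card_eq_zero F
    rw [hF] at this; exact_mod_cast this
  have h : (2 : F) * 2 = 0 := by linear_combination h4
  rcases mul_eq_zero.mp h with h | h <;> exact h

variable {ω : F}

lemma my_omega_ne_zero (hω : ω ^ 2 = ω + 1) : ω ≠ 0 := by
  intro h; rw [h] at hω
  norm_num at hω

lemma my_omega_ne_one (h2 : (2:F) = 0) (hω : ω ^ 2 = ω + 1) : ω ≠ 1 := by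
  intro h; rw [h] at hω; norm_num at hω
  exact one_ne_zero (by rw [hω]; exact h2)

lemma my_p_ne_zero (h2 : (2:F) = 0) (hω : ω ^ 2 = ω + 1) : ω + 1 ≠ 0 := by
  intro h
  exact my_omega_ne_one h2 hω (by linear_combination h - h2)

lemma my_p_ne_one (hω : ω ^ 2 = ω + 1) : ω + 1 ≠ 1 := by
  intro h; exact my_omega_ne_zero hω (by linear_combination h)

lemma my_p_ne_omega : ω + 1 ≠ ω := by
  intro h; exact one_ne_zero (by linear_combination h)

lemma my_mem4 (hF : Fintype.card F = 4) (h2 : (2:F) = 0) (hω : ω ^ 2 = ω + 1) (x : F) :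
    x = 0 ∨ x = 1 ∨ x = ω ∨ x = ω + 1 := by
  have h23 : ω ∉ ({ω + 1} : Finset F) := by
    simp only [Finset.mem_singleton]
    exact fun h => my_p_ne_omega h.symm
  have h12 : (1 : F) ∉ ({ω, ω + 1} : Finset F) := by
    simp only [Finset.mem_insert, Finset.mem_singleton]
    push_neg
    exact ⟨Ne.symm (my_omega_ne_one h2 hω), Ne.symm (my_p_ne_one hω)⟩
  have h01 : (0 : F) ∉ ({1, ω, ω + 1} : Finset F) := by
    simp only [Finset.mem_insert, Finset.mem_singleton]
    push_neg
    exact ⟨zero_ne_one, Ne.symm (my_omega_ne_zero hω), Ne.symm (my_p_ne_zero h2 hω)⟩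
  have h0 : ({0, 1, ω, ω + 1} : Finset F).card = 4 := by
    rw [Finset.card_insert_of_notMem h01, Finset.card_insert_of_notMem h12,
      Finset.card_insert_of_notMem h23, Finset.card_singleton]
  have : ({0, 1, ω, ω + 1} : Finset F) = Finset.univ :=
    Finset.eq_univ_of_card _ (h0.trans hF.symm)
  have hx : x ∈ ({0, 1, ω, ω + 1} : Finset F) := this ▸ Finset.mem_univ x
  simpa using hx

end A

section B
variable {F : Type} [Field F] [Fintype F] [DecidableEq F] {ω : F}

lemma zmod2_cases : ∀ x : ZMod 2, x = 0 ∨ x = 1 := by decide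

def bitA (ω : F) (x : F) : ZMod 2 := if x = 1 ∨ x = ω + 1 then 1 else 0
def bitB (ω : F) (x : F) : ZMod 2 := if x = ω ∨ x = ω + 1 then 1 else 0

lemma b2f_zero : (b2f 0 : F) = 0 := by simp [b2f]
lemma b2f_one : (b2f 1 : F) = 1 := by simp [b2f]

lemma b2f_add (h2 : (2:F) = 0) (x y : ZMod 2) : (b2f (x + y) : F) = b2f x + b2f y := by
  rcases zmod2_cases x with hx | hx <;> rcases zmod2_cases y with hy | hy <;>
    subst hx <;> subst hy <;> simp [b2f]
  linear_combination -h2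

lemma col_proj (h2 : (2:F) = 0) (hω : ω ^ 2 = ω + 1)
    (hx4 : ∀ y : F, y = 0 ∨ y = 1 ∨ y = ω ∨ y = ω + 1) (x : F) (e : ZMod 2) :
    (b2f (bitA ω x + e) : F) * 1 + b2f (bitB ω x + e) * ω + b2f e * ω ^ 2 = x := by
  have hne1 : ω ≠ 1 := my_omega_ne_one h2 hω
  have hne0 : ω ≠ 0 := my_omega_ne_zero hω
  have hp0 : ω + 1 ≠ 0 := my_p_ne_zero h2 hω
  have hp1 : ω + 1 ≠ 1 := my_p_ne_one hω
  have hpo : ω + 1 ≠ ω := my_p_ne_omega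
  have n1w : (1:F) ≠ ω := Ne.symm hne1
  have n0w : (0:F) ≠ ω := Ne.symm hne0
  have n0p : (0:F) ≠ ω+1 := Ne.symm hp0
  have n1p : (1:F) ≠ ω+1 := Ne.symm hp1
  have nwp : ω ≠ ω+1 := Ne.symm hpo
  rcases hx4 x with h | h | h | h <;> subst h <;>
      rcases zmod2_cases e with he | he <;> subst he <;>
      simp [bitA, bitB, b2f, hne1, hne0, hp0, hp1, hpo, n1w, n0w, n0p, n1p, nwp] <;>
      first
        | ring1
        | linear_combination hω
        | linear_combination hω + h2
        | linear_combination hω + ω * h2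
        | linear_combination hω + (ω + 1) * h2

lemma bits_eq (h2 : (2:F) = 0) (hω : ω ^ 2 = ω + 1) (v1 v2 v3 : ZMod 2) (x : F)
    (h : (b2f v1 : F) * 1 + b2f v2 * ω + b2f v3 * ω ^ 2 = x) :
    v1 = bitA ω x + v3 ∧ v2 = bitB ω x + v3 := by
  have hne1 : ω ≠ 1 := my_omega_ne_one h2 hω
  have hne0 : ω ≠ 0 := my_omega_ne_zero hω
  have hp0 : ω + 1 ≠ 0 := my_p_ne_zero h2 hω
  have hp1 : ω + 1 ≠ 1 := my_p_ne_one hω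
  have hpo : ω + 1 ≠ ω := my_p_ne_omega
  have n1w : (1:F) ≠ ω := Ne.symm hne1
  have n0w : (0:F) ≠ ω := Ne.symm hne0
  have n0p : (0:F) ≠ ω+1 := Ne.symm hp0
  have n1p : (1:F) ≠ ω+1 := Ne.symm hp1
  have nwp : ω ≠ ω+1 := Ne.symm hpo
  rcases zmod2_cases v1 with h1 | h1 <;> rcases zmod2_cases v2 with h2' | h2' <;>
    rcases zmod2_cases v3 with h3 | h3 <;> subst h1 <;> subst h2' <;> subst h3 <;>
    simp only [b2f_zero, b2f_one, one_mul, mul_one, zero_mul, zero_add, add_zero] at h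
  case inl.inl.inl =>
    have hx : x = 0 := h.symm
    subst hx
    constructor <;> simp [bitA, bitB, hne1, hne0, hp0, hp1, hpo, n1w, n0w, n0p, n1p, nwp] <;> decide
  case inl.inl.inr =>
    have hx : x = ω + 1 := by linear_combination -h + hω
    subst hx
    constructor <;> simp [bitA, bitB, hne1, hne0, hp0, hp1, hpo, n1w, n0w, n0p, n1p, nwp] <;> decide
  case inl.inr.inl =>
    have hx : x = ω := h.symm
    subst hx
    constructor <;> simp [bitA, bitB, hne1, hne0, hp0, hp1, hpo, n1w, n0w, n0p, n1p, nwp] <;> decide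
  case inl.inr.inr =>
    have hx : x = 1 := by linear_combination -h + hω + ω * h2
    subst hx
    constructor <;> simp [bitA, bitB, hne1, hne0, hp0, hp1, hpo, n1w, n0w, n0p, n1p, nwp] <;> decide
  case inr.inl.inl =>
    have hx : x = 1 := h.symm
    subst hx
    constructor <;> simp [bitA, bitB, hne1, hne0, hp0, hp1, hpo, n1w, n0w, n0p, n1p, nwp] <;> decide
  case inr.inl.inr =>
    have hx : x = ω := by linear_combination -h + hω + h2
    subst hx
    constructor <;> simp [bitA, bitB, hne1, hne0, hp0, hp1, hpo, n1w, n0w, n0p, n1p, nwp] <;> decide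
  case inr.inr.inl =>
    have hx : x = ω + 1 := by linear_combination -h
    subst hx
    constructor <;> simp [bitA, bitB, hne1, hne0, hp0, hp1, hpo, n1w, n0w, n0p, n1p, nwp] <;> decide
  case inr.inr.inr =>
    have hx : x = 0 := by linear_combination -h + hω + (ω + 1) * h2
    subst hx
    constructor <;> simp [bitA, bitB, hne1, hne0, hp0, hp1, hpo, n1w, n0w, n0p, n1p, nwp] <;> decide

end B

section C
variable {F : Type} [Field F] [Fintype F] [DecidableEq F] {ω : F}

def colQ (ω : F) (x : F) (e : ZMod 2) : Fin 4 → ZMod 2 :=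
  ![bitA ω x + bitB ω x + e, bitA ω x + e, bitB ω x + e, e]

def extendE (ω : F) (c : Fin 10 → F) (ε : Fin 9 → ZMod 2) : Fin 10 → ZMod 2 :=
  fun j => if h : j = 0 then (∑ t, (bitA ω (c t) + bitB ω (c t))) + ∑ t, ε t
    else ε (j.pred h)

def build (ω : F) (c : Fin 10 → F) (e : Fin 10 → ZMod 2) : Fin 40 → ZMod 2 :=
  fun i => colQ ω (c ⟨i.val / 4, by have := i.isLt; omega⟩)
    (e ⟨i.val / 4, by have := i.isLt; omega⟩) ⟨i.val % 4, by omega⟩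

lemma build_idx (c : Fin 10 → F) (e : Fin 10 → ZMod 2) (j : Fin 10) (k : Fin 4) :
    build ω c e (idx j k) = colQ ω (c j) (e j) k := by
  have hk := k.isLt
  have hj : (⟨(idx j k).val / 4, by have := (idx j k).isLt; omega⟩ : Fin 10) = j :=
    Fin.ext (by simp [idx]; omega)
  have hm : (⟨(idx j k).val % 4, by omega⟩ : Fin 4) = k := Fin.ext (by simp [idx])
  show colQ ω (c _) (e _) _ = _
  rw [hj, hm]

lemma colQ_0 (x : F) (e : ZMod 2) : colQ ω x e 0 = bitA ω x + bitB ω x + e := rfl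
lemma colQ_1 (x : F) (e : ZMod 2) : colQ ω x e 1 = bitA ω x + e := rfl
lemma colQ_2 (x : F) (e : ZMod 2) : colQ ω x e 2 = bitB ω x + e := rfl
lemma colQ_3 (x : F) (e : ZMod 2) : colQ ω x e 3 = e := rfl

lemma proj_build (h2 : (2:F) = 0) (hω : ω ^ 2 = ω + 1)
    (hx4 : ∀ y : F, y = 0 ∨ y = 1 ∨ y = ω ∨ y = ω + 1)
    (c : Fin 10 → F) (e : Fin 10 → ZMod 2) : Proj ω (build ω c e) = c := by
  funext j
  show (b2f (build ω c e (idx j 1)) : F) * 1 + b2f (build ω c e (idx j 2)) * ω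
      + b2f (build ω c e (idx j 3)) * ω ^ 2 = c j
  rw [build_idx, build_idx, build_idx, colQ_1, colQ_2, colQ_3]
  exact col_proj h2 hω hx4 (c j) (e j)

lemma colPar_build (c : Fin 10 → F) (e : Fin 10 → ZMod 2) (j : Fin 10) :
    colPar (build ω c e) j = 0 := by
  show ∑ k, build ω c e (idx j k) = 0
  rw [Fin.sum_univ_four]
  simp only [build_idx, colQ_0, colQ_1, colQ_2, colQ_3]
  generalize bitA ω (c j) = a
  generalize bitB ω (c j) = b
  generalize e j = x
  revert a b x; decide

lemma topPar_build (c : Fin 10 → F) (ε : Fin 9 → ZMod 2) :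
    topPar (build ω c (extendE ω c ε)) = 0 := by
  have hb : ∀ j, build ω c (extendE ω c ε) (idx j 0)
      = (bitA ω (c j) + bitB ω (c j)) + extendE ω c ε j := by
    intro j; rw [build_idx, colQ_0]
  show ∑ j, build ω c (extendE ω c ε) (idx j 0) = 0
  simp only [hb]
  rw [Finset.sum_add_distrib, Fin.sum_univ_succ (f := fun j => extendE ω c ε j)]
  have h0 : extendE ω c ε 0 = (∑ t, (bitA ω (c t) + bitB ω (c t))) + ∑ t, ε t := by
    simp [extendE]
  have hs : ∀ i : Fin 9, extendE ω c ε i.succ = ε i := by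
    intro i; simp [extendE, Fin.succ_ne_zero, Fin.pred_succ]
  simp only [hs, h0]
  generalize (∑ t, (bitA ω (c t) + bitB ω (c t))) = s
  generalize (∑ t : Fin 9, ε t) = t
  revert s t; decide

lemma col_recover (h2 : (2:F) = 0) (hω : ω ^ 2 = ω + 1) (v : Fin 40 → ZMod 2) (j : Fin 10)
    (hcol : colPar v j = 0) :
    v (idx j 0) = bitA ω (Proj ω v j) + bitB ω (Proj ω v j) + v (idx j 3)
    ∧ v (idx j 1) = bitA ω (Proj ω v j) + v (idx j 3)
    ∧ v (idx j 2) = bitB ω (Proj ω v j) + v (idx j 3) := by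
  have hb := bits_eq h2 hω (v (idx j 1)) (v (idx j 2)) (v (idx j 3)) (Proj ω v j) rfl
  have h4 : v (idx j 0) + v (idx j 1) + v (idx j 2) + v (idx j 3) = 0 := by
    rw [← Fin.sum_univ_four (f := fun k => v (idx j k))]; exact hcol
  refine ⟨?_, hb.1, hb.2⟩
  rw [hb.1, hb.2] at h4
  have key : ∀ a b p q : ZMod 2, p + (a + q) + (b + q) + q = 0 → p = a + b + q := by decide
  exact key _ _ _ _ h4

end C

section D
variable {F : Type} [Field F] [Fintype F] [DecidableEq F]

lemma idx_decomp (i : Fin 40) :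
    i = idx ⟨i.val / 4, by have := i.isLt; omega⟩ ⟨i.val % 4, by omega⟩ :=
  Fin.ext (by simp [idx]; omega)

lemma colQ_recover {ω : F} (h2 : (2:F) = 0) (hω : ω ^ 2 = ω + 1) (v : Fin 40 → ZMod 2)
    (j : Fin 10) (hcol : colPar v j = 0) (k : Fin 4) :
    colQ ω (Proj ω v j) (v (idx j 3)) k = v (idx j k) := by
  obtain ⟨r0, r1, r2⟩ := col_recover h2 hω v j hcol
  fin_cases k
  · exact r0.symm
  · exact r1.symm
  · exact r2.symm
  · rfl

def mainEquiv (ω : F) (h2 : (2:F) = 0) (hω : ω ^ 2 = ω + 1)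
    (hx4 : ∀ y : F, y = 0 ∨ y = 1 ∨ y = ω ∨ y = ω + 1) :
    {v : Fin 40 → ZMod 2 //
        Proj ω v ∈ E10 ω ∧ (∀ j : Fin 10, colPar v j = 0) ∧ topPar v = 0}
      ≃ (E10 ω × (Fin 9 → ZMod 2)) where
  toFun p := (⟨Proj ω p.1, p.2.1⟩, fun i => p.1 (idx i.succ 3))
  invFun q := ⟨build ω q.1.1 (extendE ω q.1.1 q.2),
    by
      refine ⟨?_, fun j => colPar_build _ _ _, topPar_build _ _⟩
      rw [proj_build h2 hω hx4]
      exact q.1.2⟩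
  left_inv p := by
    obtain ⟨v, hv⟩ := p
    apply Subtype.ext
    have hE : ∀ j : Fin 10,
        extendE ω (Proj ω v) (fun i => v (idx i.succ 3)) j = v (idx j 3) := by
      intro j
      by_cases hj : j = 0
      · subst hj
        rw [extendE, dif_pos rfl]
        have htop : ∑ j : Fin 10, v (idx j 0) = 0 := hv.2.2
        have hr : ∀ j : Fin 10, v (idx j 0)
            = (bitA ω (Proj ω v j) + bitB ω (Proj ω v j)) + v (idx j 3) := by
          intro j
          exact (col_recover h2 hω v j (hv.2.1 j)).1
        rw [Finset.sum_congr rfl (fun j _ => hr j), Finset.sum_add_distrib,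
          Fin.sum_univ_succ (f := fun j => v (idx j 3))] at htop
        have key : ∀ s x t : ZMod 2, s + (x + t) = 0 → s + t = x := by decide
        exact key _ _ _ htop
      · simp only [extendE, dif_neg hj, Fin.succ_pred]
    show build ω (Proj ω v) (extendE ω (Proj ω v) (fun i => v (idx i.succ 3))) = v
    funext i
    rw [idx_decomp i, build_idx, hE]
    exact colQ_recover h2 hω v _ (hv.2.1 _) _
  right_inv q := by
    obtain ⟨⟨c, hc⟩, ε⟩ := q
    have h1 : Proj ω (build ω c (extendE ω c ε)) = c := proj_build h2 hω hx4 c (extendE ω c ε)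
    refine Prod.ext ?_ ?_
    · exact Subtype.ext h1
    · funext i
      show build ω c (extendE ω c ε) (idx i.succ 3) = ε i
      rw [build_idx, colQ_3, extendE, dif_neg (Fin.succ_ne_zero i)]
      show ε ((Fin.succ i).pred _) = ε i
      rw [Fin.pred_succ]

end D

section E
variable {F : Type} [Field F] [Fintype F] [DecidableEq F]

def gE (ω : F) : Fin 5 → Fin 10 → F :=
  ![![1,1,1,1,0,0,0,0,0,0], ![0,0,1,1,1,1,0,0,0,0],
    ![0,0,0,0,1,1,1,1,0,0], ![0,0,0,0,0,0,1,1,1,1],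
    ![1,0,1,0,1,0,1,0,ω,ω^2]]

lemma card_E10 (hF : Fintype.card F = 4) {ω : F} (h2 : (2:F) = 0) (hω : ω ^ 2 = ω + 1) :
    Nat.card (E10 ω) = 1024 := by
  classical
  have hne0 : ω ≠ 0 := my_omega_ne_zero hω
  have hli : LinearIndependent F (gE ω) := by
    rw [Fintype.linearIndependent_iff]
    intro a ha
    have h := fun (t : Fin 10) => congrFun ha t
    have G : ∀ t : Fin 10, a 0 * gE ω 0 t + a 1 * gE ω 1 t + a 2 * gE ω 2 t
        + a 3 * gE ω 3 t + a 4 * gE ω 4 t = 0 := by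
      intro t
      have := h t
      rw [Fin.sum_univ_five] at this
      simpa using this
    have e1 := G 1
    have e3 := G 3
    have e5 := G 5
    have e7 := G 7
    have e8 := G 8
    rw [show gE ω 0 (1:Fin 10) = 1 from rfl, show gE ω 1 (1:Fin 10) = 0 from rfl,
      show gE ω 2 (1:Fin 10) = 0 from rfl, show gE ω 3 (1:Fin 10) = 0 from rfl,
      show gE ω 4 (1:Fin 10) = 0 from rfl] at e1
    rw [show gE ω 0 (3:Fin 10) = 1 from rfl, show gE ω 1 (3:Fin 10) = 1 from rfl,
      show gE ω 2 (3:Fin 10) = 0 from rfl, show gE ω 3 (3:Fin 10) = 0 from rfl,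
      show gE ω 4 (3:Fin 10) = 0 from rfl] at e3
    rw [show gE ω 0 (5:Fin 10) = 0 from rfl, show gE ω 1 (5:Fin 10) = 1 from rfl,
      show gE ω 2 (5:Fin 10) = 1 from rfl, show gE ω 3 (5:Fin 10) = 0 from rfl,
      show gE ω 4 (5:Fin 10) = 0 from rfl] at e5
    rw [show gE ω 0 (7:Fin 10) = 0 from rfl, show gE ω 1 (7:Fin 10) = 0 from rfl,
      show gE ω 2 (7:Fin 10) = 1 from rfl, show gE ω 3 (7:Fin 10) = 1 from rfl,
      show gE ω 4 (7:Fin 10) = 0 from rfl] at e7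
    rw [show gE ω 0 (8:Fin 10) = 0 from rfl, show gE ω 1 (8:Fin 10) = 0 from rfl,
      show gE ω 2 (8:Fin 10) = 0 from rfl, show gE ω 3 (8:Fin 10) = 1 from rfl,
      show gE ω 4 (8:Fin 10) = ω from rfl] at e8
    have ha0 : a 0 = 0 := by linear_combination e1
    have ha1 : a 1 = 0 := by linear_combination e3 - ha0
    have ha2 : a 2 = 0 := by linear_combination e5 - ha1
    have ha3 : a 3 = 0 := by linear_combination e7 - ha2
    have ha4 : a 4 = 0 := by
      have hm : a 4 * ω = 0 := by linear_combination e8 - ha3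
      rcases mul_eq_zero.mp hm with h' | h'
      · exact h'
      · exact absurd h' hne0
    intro i
    fin_cases i <;> assumption
  have hrange : E10 ω = Submodule.span F (Set.range (gE ω)) := by
    rw [E10]
    congr 1
    rw [show gE ω = ![![1,1,1,1,0,0,0,0,0,0], ![0,0,1,1,1,1,0,0,0,0],
      ![0,0,0,0,1,1,1,1,0,0], ![0,0,0,0,0,0,1,1,1,1],
      ![1,0,1,0,1,0,1,0,ω,ω^2]] from rfl]
    rw [Matrix.range_cons, Matrix.range_cons, Matrix.range_cons, Matrix.range_cons,
      Matrix.range_cons, Matrix.range_empty]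
    simp only [Set.singleton_union, Set.union_empty]
  rw [hrange]
  have b : Module.Basis (Fin 5) F (Submodule.span F (Set.range (gE ω))) := Module.Basis.span hli
  rw [Nat.card_congr (b.repr.toEquiv.trans Finsupp.equivFunOnFinite)]
  rw [Nat.card_eq_fintype_card, Fintype.card_fun, hF]
  norm_num
end E

section G
variable {F : Type} [Field F] [Fintype F] [DecidableEq F]

def uvec : Fin 40 → ZMod 2 := fun i =>
  if i.val = 0 then 0 else if i.val < 4 then 1 else if i.val % 4 = 0 then 1 else 0

lemma proj_add {ω : F} (h2 : (2:F) = 0) (v w : Fin 40 → ZMod 2) (j : Fin 10) :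
    Proj ω (v + w) j = Proj ω v j + Proj ω w j := by
  simp only [Proj, Pi.add_apply, b2f_add h2]
  ring

lemma uvec_idx1 : ∀ j : Fin 10, uvec (idx j 1) = if j = 0 then 1 else 0 := by decide
lemma uvec_idx2 : ∀ j : Fin 10, uvec (idx j 2) = if j = 0 then 1 else 0 := by decide
lemma uvec_idx3 : ∀ j : Fin 10, uvec (idx j 3) = if j = 0 then 1 else 0 := by decide

lemma proj_uvec {ω : F} (h2 : (2:F) = 0) (hω : ω ^ 2 = ω + 1) (j : Fin 10) :
    Proj ω uvec j = 0 := by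
  unfold Proj
  rw [uvec_idx1 j, uvec_idx2 j, uvec_idx3 j]
  by_cases hj : j = 0
  · subst hj
    simp [b2f]
    first
      | linear_combination hω + (ω + 1) * h2
      | linear_combination hω + ω * h2
      | linear_combination hω + h2
      | linear_combination hω
      | linear_combination -hω - (ω + 1) * h2
  · simp [hj, b2f]

lemma colPar_add (v w : Fin 40 → ZMod 2) (j : Fin 10) :
    colPar (v + w) j = colPar v j + colPar w j := by
  simp [colPar, Finset.sum_add_distrib]

lemma topPar_add (v w : Fin 40 → ZMod 2) :
    topPar (v + w) = topPar v + topPar w := by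
  simp [topPar, Finset.sum_add_distrib]

lemma colPar_uvec : ∀ j : Fin 10, colPar uvec j = 1 := by decide

lemma topPar_uvec : topPar uvec = 1 := by decide

lemma add_uvec_uvec (v : Fin 40 → ZMod 2) : v + uvec + uvec = v := by
  funext i
  have : ∀ a b : ZMod 2, a + b + b = a := by decide
  exact this (v i) (uvec i)

def oddEquiv (ω : F) (h2 : (2:F) = 0) (hω : ω ^ 2 = ω + 1) :
    {v : Fin 40 → ZMod 2 //
        Proj ω v ∈ E10 ω ∧ (∀ j : Fin 10, colPar v j = 1) ∧ topPar v = 1}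
      ≃ {v : Fin 40 → ZMod 2 //
        Proj ω v ∈ E10 ω ∧ (∀ j : Fin 10, colPar v j = 0) ∧ topPar v = 0} where
  toFun p := ⟨p.1 + uvec, by
    obtain ⟨v, hE, hC, hT⟩ := p
    refine ⟨?_, fun j => ?_, ?_⟩
    · have : Proj ω (v + uvec) = Proj ω v := by
        funext j
        rw [proj_add h2, proj_uvec h2 hω, add_zero]
      rw [this]; exact hE
    · rw [colPar_add, hC j, colPar_uvec j]; decide
    · rw [topPar_add, hT, topPar_uvec]; decide⟩
  invFun q := ⟨q.1 + uvec, by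
    obtain ⟨v, hE, hC, hT⟩ := q
    refine ⟨?_, fun j => ?_, ?_⟩
    · have : Proj ω (v + uvec) = Proj ω v := by
        funext j
        rw [proj_add h2, proj_uvec h2 hω, add_zero]
      rw [this]; exact hE
    · rw [colPar_add, hC j, colPar_uvec j]; decide
    · rw [topPar_add, hT, topPar_uvec]; decide⟩
  left_inv p := Subtype.ext (add_uvec_uvec p.1)
  right_inv q := Subtype.ext (add_uvec_uvec q.1)

end G


/-- There are exactly 2¹⁹ vectors v ∈ 𝔽₂⁴⁰ with Proj(v) ∈ E₁₀, all
columns even and top row even; and exactly 2¹⁹ with all columns odd and top row odd. -/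
theorem stmt_13 (F : Type) [Field F] [Fintype F] [DecidableEq F]
    (hF : Fintype.card F = 4) (ω : F) (hω : ω ^ 2 = ω + 1) :
    Nat.card {v : Fin 40 → ZMod 2 //
        Proj ω v ∈ E10 ω ∧ (∀ j : Fin 10, colPar v j = 0) ∧ topPar v = 0} = 2 ^ 19 ∧
    Nat.card {v : Fin 40 → ZMod 2 //
        Proj ω v ∈ E10 ω ∧ (∀ j : Fin 10, colPar v j = 1) ∧ topPar v = 1} = 2 ^ 19 := by
  have h2 : (2:F) = 0 := my_two_eq_zero hF
  have hx4 : ∀ y : F, y = 0 ∨ y = 1 ∨ y = ω ∨ y = ω + 1 := fun y => my_mem4 hF h2 hω y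
  have hcount : Nat.card {v : Fin 40 → ZMod 2 //
      Proj ω v ∈ E10 ω ∧ (∀ j : Fin 10, colPar v j = 0) ∧ topPar v = 0} = 2 ^ 19 := by
    rw [Nat.card_congr (mainEquiv ω h2 hω hx4), Nat.card_prod, card_E10 hF h2 hω,
      Nat.card_eq_fintype_card, Fintype.card_fun]
    simp [ZMod.card]
  exact ⟨hcount, by rw [Nat.card_congr (oddEquiv ω h2 hω)]; exact hcount⟩
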